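/- If a graph G is d-degenerate, then for every q ≥ d+1, all proper q-colourings of G are Kempe equivalent (i.e., there is a single Kempe class). -/

import Mathlib

open SimpleGraph

variable {V : Type*}

/-- Topological embedding of a simple graph in a space `S`. -/
def SimpleGraph.EmbedsIn (G : SimpleGraph V) (S : Type*) [TopologicalSpace S] : Prop :=
  ∃ (φ : V → S) (γ : ∀ u v, G.Adj u v → _root_.Path (φ u) (φ v)),
    Function.Injective φ ∧
    (∀ u v (h : G.Adj u v), Function.Injective (γ u v h : unitInterval → S)) ∧
    (∀ u v (h : G.Adj u v), γ v u h.symm = (γ u v h).symm) ∧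
    (∀ u v (h : G.Adj u v) (t : unitInterval),
        (γ u v h) t ∈ Set.range φ → t = 0 ∨ t = 1) ∧
    (∀ u v u' v' (h : G.Adj u v) (h' : G.Adj u' v') (t₁ t₂ : unitInterval),
        s(u, v) ≠ s(u', v') → (γ u v h) t₁ = (γ u' v' h') t₂ →
        (γ u v h) t₁ ∈ Set.range φ)

/-- The 2-sphere. -/
abbrev Sphere2 : Type := Metric.sphere (0 : EuclideanSpace ℝ (Fin 3)) 1

/-- The torus. -/
abbrev Torus2 : Type := AddCircle (1 : ℝ) × AddCircle (1 : ℝ)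

/-- `G` is `d`-degenerate: every nonempty (induced) subgraph has a vertex
of degree at most `d`. -/
def SimpleGraph.IsDegenerate (G : SimpleGraph V) (d : ℕ) : Prop :=
  ∀ s : Set V, s.Nonempty → ∃ v ∈ s, ({u ∈ s | G.Adj v u}).ncard ≤ d

/-- A proper colouring with `q` colours. -/
def SimpleGraph.IsProperColoring (G : SimpleGraph V) {q : ℕ} (c : V → Fin q) : Prop :=
  ∀ ⦃u v⦄, G.Adj u v → c u ≠ c v

/-- The subgraph of `G` induced by the vertices coloured `a` or `b`. -/
def SimpleGraph.kempeGraph (G : SimpleGraph V) {q : ℕ} (c : V → Fin q) (a b : Fin q) :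
    SimpleGraph V :=
  SimpleGraph.fromRel fun u v => G.Adj u v ∧ (c u = a ∨ c u = b) ∧ (c v = a ∨ c v = b)

/-- A Kempe move: swap colours `a` and `b` on the connected component of `v₀`
in the subgraph induced by the vertices coloured `a` or `b`. -/
def SimpleGraph.KempeStep (G : SimpleGraph V) {q : ℕ} (c₁ c₂ : V → Fin q) : Prop :=
  ∃ (a b : Fin q) (v₀ : V),
    (∀ v, (G.kempeGraph c₁ a b).Reachable v₀ v → c₂ v = Equiv.swap a b (c₁ v)) ∧
    (∀ v, ¬ (G.kempeGraph c₁ a b).Reachable v₀ v → c₂ v = c₁ v)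

/-- Kempe equivalence: a finite sequence of Kempe moves. -/
def SimpleGraph.KempeEquiv (G : SimpleGraph V) {q : ℕ} (c₁ c₂ : V → Fin q) : Prop :=
  Relation.ReflTransGen (G.KempeStep) c₁ c₂


section KempeHelpers
variable {V : Type*} {q : ℕ}

lemma kempeGraph_adj (G : SimpleGraph V) (c : V → Fin q) (a b : Fin q) {u w : V} :
    (G.kempeGraph c a b).Adj u w ↔
      G.Adj u w ∧ (c u = a ∨ c u = b) ∧ (c w = a ∨ c w = b) := by
  simp only [SimpleGraph.kempeGraph, SimpleGraph.fromRel_adj]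
  constructor
  · rintro ⟨hne, ⟨h1, h2, h3⟩ | ⟨h1, h2, h3⟩⟩
    exacts [⟨h1, h2, h3⟩, ⟨h1.symm, h3, h2⟩]
  · rintro ⟨h1, h2, h3⟩
    exact ⟨h1.ne, Or.inl ⟨h1, h2, h3⟩⟩

lemma swap_mem' {a b x : Fin q} (h : x = a ∨ x = b) :
    Equiv.swap a b x = a ∨ Equiv.swap a b x = b := by
  rcases h with h | h <;> subst h <;> simp

lemma swap_not_mem' {a b x : Fin q} (h : ¬(x = a ∨ x = b)) : Equiv.swap a b x = x :=
  Equiv.swap_apply_of_ne_of_ne (by tauto) (by tauto)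

lemma reachable_eq_of_isolated {H : SimpleGraph V} {x u : V}
    (hiso : ∀ w, ¬ H.Adj x w) (h : H.Reachable x u) : u = x := by
  rw [SimpleGraph.reachable_iff_reflTransGen] at h
  rcases h.cases_head with h | ⟨b, hb, _⟩
  · exact h.symm
  · exact absurd hb (hiso b)

lemma exists_adj_of_reachable {H : SimpleGraph V} {x u : V}
    (h : H.Reachable x u) (hne : u ≠ x) : ∃ w, H.Adj w u := by
  rw [SimpleGraph.reachable_iff_reflTransGen] at h
  rcases h.cases_tail with h | ⟨b, _, hb⟩
  · exact absurd h hne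
  · exact ⟨b, hb⟩

/-- A Kempe step preserves properness. -/
lemma kempeStep_proper {G : SimpleGraph V} {c₁ c₂ : V → Fin q}
    (h : G.KempeStep c₁ c₂) (hp : G.IsProperColoring c₁) : G.IsProperColoring c₂ := by
  obtain ⟨a, b, v₀, hR, hNR⟩ := h
  intro u w huw
  by_cases hu : (G.kempeGraph c₁ a b).Reachable v₀ u <;>
    by_cases hw : (G.kempeGraph c₁ a b).Reachable v₀ w
  · rw [hR u hu, hR w hw]
    exact fun he => hp huw (Equiv.injective _ he)
  · rw [hR u hu, hNR w hw]
    by_cases hcu : c₁ u = a ∨ c₁ u = b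
    · have hcw : ¬ (c₁ w = a ∨ c₁ w = b) := fun hcw' =>
        hw (hu.trans ((kempeGraph_adj G c₁ a b).2 ⟨huw, hcu, hcw'⟩).reachable)
      rcases swap_mem' hcu with h' | h' <;> rw [h'] <;> tauto
    · rw [swap_not_mem' hcu]; exact hp huw
  · rw [hNR u hu, hR w hw]
    by_cases hcw : c₁ w = a ∨ c₁ w = b
    · have hcu : ¬ (c₁ u = a ∨ c₁ u = b) := fun hcu' =>
        hu (hw.trans ((kempeGraph_adj G c₁ a b).2 ⟨huw.symm, hcw, hcu'⟩).reachable)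
      rcases swap_mem' hcw with h' | h' <;> rw [h'] <;> tauto
    · rw [swap_not_mem' hcw]; exact hp huw
  · rw [hNR u hu, hNR w hw]; exact hp huw

lemma kempeEquiv_proper {G : SimpleGraph V} {c₁ c₂ : V → Fin q}
    (h : G.KempeEquiv c₁ c₂) (hp : G.IsProperColoring c₁) : G.IsProperColoring c₂ := by
  induction h with
  | refl => exact hp
  | tail _ hstep ih => exact kempeStep_proper hstep ih

/-- The Kempe graph only depends on the values of the colouring on
non-isolated vertices. -/
lemma kempeGraph_congr {H : SimpleGraph V} {c c' : V → Fin q} (a b : Fin q)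
    (h : ∀ u, (∃ w, H.Adj u w) → c u = c' u) :
    H.kempeGraph c a b = H.kempeGraph c' a b := by
  ext u w
  rw [kempeGraph_adj, kempeGraph_adj]
  have hu' : ∀ u w, H.Adj u w → c u = c' u := fun u w hw => h u ⟨w, hw⟩
  constructor
  · rintro ⟨h1, h2, h3⟩
    rw [hu' u w h1] at h2; rw [hu' w u h1.symm] at h3
    exact ⟨h1, h2, h3⟩
  · rintro ⟨h1, h2, h3⟩
    rw [← hu' u w h1] at h2; rw [← hu' w u h1.symm] at h3
    exact ⟨h1, h2, h3⟩

/-- Recolouring isolated vertices arbitrarily is a Kempe equivalence. -/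
lemma kempeEquiv_of_isolated [Finite V] {G : SimpleGraph V} (c₁ c₂ : V → Fin q)
    (h : ∀ u, c₁ u ≠ c₂ u → ∀ w, ¬ G.Adj u w) : G.KempeEquiv c₁ c₂ := by
  classical
  have key : ∀ n : ℕ, ∀ c₁ : V → Fin q, {u | c₁ u ≠ c₂ u}.ncard ≤ n →
      (∀ u, c₁ u ≠ c₂ u → ∀ w, ¬ G.Adj u w) → G.KempeEquiv c₁ c₂ := by
    intro n
    induction n with
    | zero =>
      intro c₁ hn _
      have : {u | c₁ u ≠ c₂ u} = ∅ := by
        rw [← Set.ncard_eq_zero (Set.toFinite _)]; omega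
      have : c₁ = c₂ := by
        funext u
        by_contra hu
        exact absurd (Set.eq_empty_iff_forall_notMem.1 this u hu) (fun h => h)
      rw [this]
      exact Relation.ReflTransGen.refl
    | succ n ih =>
      intro c₁ hn hiso
      by_cases hD : {u | c₁ u ≠ c₂ u} = ∅
      · have : c₁ = c₂ := by
          funext u
          by_contra hu
          exact Set.eq_empty_iff_forall_notMem.1 hD u hu
        rw [this]
        exact Relation.ReflTransGen.refl
      · obtain ⟨u, hu⟩ := Set.nonempty_iff_ne_empty.2 hD
        have huiso : ∀ w, ¬ G.Adj u w := hiso u hu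
        set c₁' := Function.update c₁ u (c₂ u) with hc₁'
        have hkiso : ∀ w, ¬ (G.kempeGraph c₁ (c₁ u) (c₂ u)).Adj u w := by
          intro w hw
          exact huiso w ((kempeGraph_adj ..).1 hw).1
        have hstep : G.KempeStep c₁ c₁' := by
          refine ⟨c₁ u, c₂ u, u, fun w hw => ?_, fun w hw => ?_⟩
          · have := reachable_eq_of_isolated hkiso hw
            subst this
            simp [hc₁', Function.update_self]
          · have : w ≠ u := by
              intro h; subst h
              exact hw (SimpleGraph.Reachable.refl w)
            simp [hc₁', Function.update_of_ne this]
        have hsub : {w | c₁' w ≠ c₂ w} ⊆ {w | c₁ w ≠ c₂ w} \ {u} := by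
          intro w hw
          have hwu : w ≠ u := by
            intro h; subst h
            exact hw (by simp [hc₁'])
          refine ⟨?_, hwu⟩
          rwa [Set.mem_setOf_eq, hc₁', Function.update_of_ne hwu] at hw
        have hcard : {w | c₁' w ≠ c₂ w}.ncard ≤ n := by
          have h1 : ({w | c₁ w ≠ c₂ w} \ {u}).ncard = {w | c₁ w ≠ c₂ w}.ncard - 1 :=
            Set.ncard_diff_singleton_of_mem hu
          have h2 := Set.ncard_le_ncard hsub (Set.toFinite _)
          have h3 : 0 < {w | c₁ w ≠ c₂ w}.ncard :=
            (Set.ncard_pos (Set.toFinite _)).2 ⟨u, hu⟩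
          omega
        have hiso' : ∀ w, c₁' w ≠ c₂ w → ∀ x, ¬ G.Adj w x := by
          intro w hw
          exact hiso w (hsub hw).1
        exact Relation.ReflTransGen.head hstep (ih c₁' hcard hiso')
  exact key _ c₁ le_rfl h

end KempeHelpers
section DegenerateMain
variable {V : Type*} {q : ℕ}

/-- The graph `G` restricted to the vertex set `s` (vertices outside `s` become isolated). -/
def indG (G : SimpleGraph V) (s : Set V) : SimpleGraph V :=
  SimpleGraph.fromRel fun u v => G.Adj u v ∧ u ∈ s ∧ v ∈ s

lemma indG_adj {G : SimpleGraph V} {s : Set V} {u w : V} :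
    (indG G s).Adj u w ↔ G.Adj u w ∧ u ∈ s ∧ w ∈ s := by
  simp only [indG, SimpleGraph.fromRel_adj]
  constructor
  · rintro ⟨hne, ⟨h1, h2, h3⟩ | ⟨h1, h2, h3⟩⟩
    exacts [⟨h1, h2, h3⟩, ⟨h1.symm, h3, h2⟩]
  · rintro ⟨h1, h2, h3⟩
    exact ⟨h1.ne, Or.inl ⟨h1, h2, h3⟩⟩

lemma indG_le {G : SimpleGraph V} {s t : Set V} (hst : s ⊆ t) : indG G s ≤ indG G t := by
  intro u w h
  rw [indG_adj] at h ⊢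
  exact ⟨h.1, hst h.2.1, hst h.2.2⟩

/-- If two proper colourings differ at a single vertex, they are one Kempe move apart. -/
lemma final_step {H : SimpleGraph V} {c'' c₂ : V → Fin q} {v : V}
    (hp'' : H.IsProperColoring c'') (hp₂ : H.IsProperColoring c₂)
    (hagree : ∀ u, u ≠ v → c'' u = c₂ u) : H.KempeStep c'' c₂ := by
  have hiso : ∀ w, ¬ (H.kempeGraph c'' (c'' v) (c₂ v)).Adj v w := by
    intro w hw
    rw [kempeGraph_adj] at hw
    obtain ⟨hadj, _, hcw⟩ := hw
    have hwv : w ≠ v := hadj.ne'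
    rcases hcw with h | h
    · exact hp'' hadj h.symm
    · rw [hagree w hwv] at h
      exact hp₂ hadj h.symm
  refine ⟨c'' v, c₂ v, v, fun u hu => ?_, fun u hu => ?_⟩
  · have := reachable_eq_of_isolated hiso hu
    subst this
    rw [Equiv.swap_apply_left]
  · have huv : u ≠ v := by
      intro h; subst h
      exact hu (SimpleGraph.Reachable.refl u)
    exact (hagree u huv).symm

/-- The key one-step lifting lemma. -/
lemma single_lift [Finite V] {G : SimpleGraph V} {d : ℕ} (hq : d + 1 ≤ q) {s : Set V} {v : V}
    (hv : v ∈ s) (hd : ({u ∈ s | G.Adj v u}).ncard ≤ d)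
    {c₀ : V → Fin q} (hc₀ : (indG G s).IsProperColoring c₀) (α β : Fin q) (v₀ : V) :
    ∃ d', (indG G s).KempeEquiv c₀ d' ∧
      ∀ u, u ≠ v →
        (((indG G (s \ {v})).kempeGraph c₀ α β).Reachable v₀ u →
          d' u = Equiv.swap α β (c₀ u)) ∧
        (¬ ((indG G (s \ {v})).kempeGraph c₀ α β).Reachable v₀ u → d' u = c₀ u) := by
  classical
  set Hk := (indG G (s \ {v})).kempeGraph c₀ α β with hHkdef
  set K := (indG G s).kempeGraph c₀ α β with hKdef
  have hKle : Hk ≤ K := by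
    intro u w h
    rw [hHkdef, kempeGraph_adj] at h
    rw [hKdef, kempeGraph_adj]
    exact ⟨indG_le Set.diff_subset h.1, h.2⟩
  have hHkv : ∀ w, ¬ Hk.Adj v w := by
    intro w h
    rw [hHkdef, kempeGraph_adj, indG_adj] at h
    exact h.1.2.1.2 rfl
  have hKHk : ∀ u w, K.Adj u w → u ≠ v → w ≠ v → Hk.Adj u w := by
    intro u w h hu hw
    rw [hKdef, kempeGraph_adj, indG_adj] at h
    rw [hHkdef, kempeGraph_adj, indG_adj]
    exact ⟨⟨h.1.1, ⟨h.1.2.1, hu⟩, ⟨h.1.2.2, hw⟩⟩, h.2⟩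
  by_cases hab : α = β
  · subst hab
    refine ⟨c₀, Relation.ReflTransGen.refl, fun u hu => ⟨fun _ => ?_, fun _ => rfl⟩⟩
    rw [Equiv.swap_self]; rfl
  by_cases hv₀ : v₀ = v
  · subst hv₀
    refine ⟨c₀, Relation.ReflTransGen.refl, fun u hu => ⟨fun hr => ?_, fun _ => rfl⟩⟩
    exact absurd (reachable_eq_of_isolated hHkv hr) hu
  by_cases hcv₀ : c₀ v₀ = α ∨ c₀ v₀ = β
  swap
  · have hiso : ∀ w, ¬ Hk.Adj v₀ w := by
      intro w h
      rw [hHkdef, kempeGraph_adj] at h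
      exact hcv₀ h.2.1
    refine ⟨c₀, Relation.ReflTransGen.refl, fun u hu => ⟨fun hr => ?_, fun _ => rfl⟩⟩
    have := reachable_eq_of_isolated hiso hr
    subst this
    rw [swap_not_mem' hcv₀]
  by_cases hcv : c₀ v = α ∨ c₀ v = β
  swap
  · -- Case A : v is not coloured α or β, so it is isolated in K and K = Hk
    have hKiso : ∀ w, ¬ K.Adj v w := by
      intro w h
      rw [hKdef, kempeGraph_adj] at h
      exact hcv h.2.1
    have hKeq : K = Hk := by
      ext u w
      constructor
      · intro h
        have hu : u ≠ v := fun he => hKiso w (he ▸ h)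
        have hw : w ≠ v := fun he => hKiso u (he ▸ h.symm)
        exact hKHk u w h hu hw
      · exact fun h => hKle h
    refine ⟨fun u => if K.Reachable v₀ u then Equiv.swap α β (c₀ u) else c₀ u,
      Relation.ReflTransGen.single
        ⟨α, β, v₀, fun u hu => if_pos hu, fun u hu => if_neg hu⟩,
      fun u hu => ⟨fun hr => ?_, fun hr => ?_⟩⟩
    · have h' : K.Reachable v₀ u := by rw [hKeq]; exact hr
      simp only [if_pos h']
    · have h' : ¬ K.Reachable v₀ u := by rw [hKeq]; exact hr
      simp only [if_neg h']
  by_cases hreach : K.Reachable v₀ v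
  swap
  · -- Case B1 : v not reachable, so reachability in K and Hk from v₀ coincide
    have hiff : ∀ u, K.Reachable v₀ u → Hk.Reachable v₀ u := by
      intro u h
      rw [SimpleGraph.reachable_iff_reflTransGen] at h
      induction h with
      | refl => exact SimpleGraph.Reachable.refl v₀
      | @tail b c hab' hbc ih =>
        have hbr : K.Reachable v₀ b := ih.mono hKle
        have hb : b ≠ v := fun he => hreach (he ▸ hbr)
        have hc : c ≠ v := fun he => hreach (he ▸ hbr.trans hbc.reachable)
        exact ih.trans (hKHk b c hbc hb hc).reachable
    refine ⟨fun u => if K.Reachable v₀ u then Equiv.swap α β (c₀ u) else c₀ u,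
      Relation.ReflTransGen.single
        ⟨α, β, v₀, fun u hu => if_pos hu, fun u hu => if_neg hu⟩,
      fun u hu => ⟨fun hr => ?_, fun hr => ?_⟩⟩
    · simp only [if_pos (hr.mono hKle)]
    · have h' : ¬ K.Reachable v₀ u := fun h => hr (hiff u h)
      simp only [if_neg h']
  -- Case B2 : c₀ v ∈ {α, β} and v is reachable from v₀ in K
  by_cases hfree : ∃ η : Fin q, η ≠ α ∧ η ≠ β ∧ ∀ u, (indG G s).Adj v u → c₀ u ≠ η
  · -- B2i : recolour v to η first, then do the move
    obtain ⟨η, hηα, hηβ, hηfree⟩ := hfree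
    set c₁ := Function.update c₀ v η with hc₁def
    have hkiso1 : ∀ w, ¬ ((indG G s).kempeGraph c₀ (c₀ v) η).Adj v w := by
      intro w h
      rw [kempeGraph_adj] at h
      obtain ⟨hadj, _, hcw⟩ := h
      rcases hcw with h' | h'
      · exact hc₀ hadj h'.symm
      · exact hηfree w hadj h'
    have hstep1 : (indG G s).KempeStep c₀ c₁ := by
      refine ⟨c₀ v, η, v, fun u hu => ?_, fun u hu => ?_⟩
      · have := reachable_eq_of_isolated hkiso1 hu
        subst this
        rw [hc₁def, Function.update_self, Equiv.swap_apply_left]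
      · have huv : u ≠ v := by
          intro h; subst h
          exact hu (SimpleGraph.Reachable.refl u)
        rw [hc₁def, Function.update_of_ne huv]
    have hc₁off : ∀ u, u ≠ v → c₁ u = c₀ u := fun u hu => Function.update_of_ne hu _ _
    have hc₁v : c₁ v = η := Function.update_self _ _ _
    set Hk1 := (indG G s).kempeGraph c₁ α β with hHk1def
    have hHk1iso : ∀ w, ¬ Hk1.Adj v w := by
      intro w h
      rw [hHk1def, kempeGraph_adj] at h
      rcases h.2.1 with h' | h'
      · exact hηα (hc₁v ▸ h')
      · exact hηβ (hc₁v ▸ h')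
    have hH1eq : Hk1 = Hk := by
      ext u w
      constructor
      · intro h
        have hu : u ≠ v := fun he => hHk1iso w (he ▸ h)
        have hw : w ≠ v := fun he => hHk1iso u (he ▸ h.symm)
        have h' : K.Adj u w := by
          rw [hHk1def, kempeGraph_adj] at h
          rw [hKdef, kempeGraph_adj]
          rw [hc₁off u hu, hc₁off w hw] at h
          exact h
        exact hKHk u w h' hu hw
      · intro h
        have hu : u ≠ v := by
          rw [hHkdef, kempeGraph_adj, indG_adj] at h
          exact h.1.2.1.2
        have hw : w ≠ v := by
          rw [hHkdef, kempeGraph_adj, indG_adj] at h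
          exact h.1.2.2.2
        have h' := hKle h
        rw [hKdef, kempeGraph_adj] at h'
        rw [hHk1def, kempeGraph_adj, hc₁off u hu, hc₁off w hw]
        exact h'
    refine ⟨fun u => if Hk1.Reachable v₀ u then Equiv.swap α β (c₁ u) else c₁ u,
      Relation.ReflTransGen.head hstep1 (Relation.ReflTransGen.single
        ⟨α, β, v₀, fun u hu => if_pos hu, fun u hu => if_neg hu⟩),
      fun u hu => ⟨fun hr => ?_, fun hr => ?_⟩⟩
    · have h' : Hk1.Reachable v₀ u := by rw [hH1eq]; exact hr
      simp only [if_pos h']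
      rw [hc₁off u hu]
    · have h' : ¬ Hk1.Reachable v₀ u := by rw [hH1eq]; exact hr
      simp only [if_neg h']
      exact hc₁off u hu
  · -- B2ii : no free colour; then v has a unique neighbour coloured δ
    push_neg at hfree
    -- δ is the member of {α, β} other than c₀ v
    set δ := if c₀ v = α then β else α with hδdef
    have hδmem : δ = α ∨ δ = β := by
      rw [hδdef]; split <;> simp
    have hγδ : c₀ v ≠ δ := by
      rw [hδdef]; split
      · intro h; exact hab ((‹c₀ v = α›).symm.trans h)
      · intro h; exact ‹¬ c₀ v = α› h
    have hother : ∀ x : Fin q, (x = α ∨ x = β) → x ≠ c₀ v → x = δ := by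
      intro x hx hxv
      rw [hδdef]; split
      · rcases hx with h | h
        · exact absurd (h.trans ‹c₀ v = α›.symm) hxv
        · exact h
      · rcases hx with h | h
        · exact h
        · rcases hcv with h' | h'
          · exact absurd h' ‹¬ c₀ v = α›
          · exact absurd (h.trans h'.symm) hxv
    set N := {u | (indG G s).Adj v u} with hNdef
    have hNd : N.ncard ≤ d := by
      have : N = {u ∈ s | G.Adj v u} := by
        ext u
        rw [hNdef, Set.mem_setOf_eq, indG_adj, Set.mem_setOf_eq]
        exact ⟨fun h => ⟨h.2.2, h.1⟩, fun h => ⟨h.2, hv, h.1⟩⟩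
      rw [this]; exact hd
    have hq2 : 2 ≤ q := by
      have : Nontrivial (Fin q) := ⟨⟨α, β, hab⟩⟩
      have := Fintype.one_lt_card_iff_nontrivial.2 this
      exact (by simpa using this : 1 < q)
    -- existence of a δ-coloured neighbour
    obtain ⟨w, hwadj'⟩ := exists_adj_of_reachable hreach (Ne.symm hv₀)
    have hwadj : (indG G s).Adj v w := by
      rw [hKdef, kempeGraph_adj] at hwadj'
      exact hwadj'.1.symm
    have hwδ : c₀ w = δ := by
      rw [hKdef, kempeGraph_adj] at hwadj'
      exact hother _ hwadj'.2.1 (fun h => hc₀ hwadj (h.symm ▸ rfl))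
    -- uniqueness
    have huniq : ∀ w', (indG G s).Adj v w' → c₀ w' = δ → w' = w := by
      intro w' hadj' hδ'
      by_contra hne'
      have hwN : w ∈ N := hwadj
      have hw'N : w' ∈ N := hadj'
      have hsub : {x : Fin q | x ≠ c₀ v} ⊆ c₀ '' (N \ {w'}) := by
        intro x hx
        by_cases hxδ : x = δ
        · exact ⟨w, ⟨hwN, fun h => hne' ((Set.mem_singleton_iff.1 h).symm ▸ rfl)⟩,
            hxδ ▸ hwδ⟩
        · have hxa : x ≠ α := fun h => hxδ (hother x (Or.inl h) hx)
          have hxb : x ≠ β := fun h => hxδ (hother x (Or.inr h) hx)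
          obtain ⟨u, huadj, hcu⟩ := hfree x hxa hxb
          refine ⟨u, ⟨huadj, fun h => ?_⟩, hcu⟩
          rw [Set.mem_singleton_iff] at h
          subst h
          exact hxδ (hcu ▸ hδ' ▸ rfl)
      have hc1 : ({x : Fin q | x ≠ c₀ v}).ncard = q - 1 := by
        have he : {x : Fin q | x ≠ c₀ v} = Set.univ \ {c₀ v} := by
          ext x; simp
        rw [he, Set.ncard_diff_singleton_of_mem (Set.mem_univ _),
          Set.ncard_univ, Nat.card_eq_fintype_card, Fintype.card_fin]
      have hc2 : (c₀ '' (N \ {w'})).ncard ≤ (N \ {w'}).ncard :=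
        Set.ncard_image_le (Set.toFinite _)
      have hc3 : (N \ {w'}).ncard = N.ncard - 1 :=
        Set.ncard_diff_singleton_of_mem hw'N
      have hc4 : 0 < N.ncard := (Set.ncard_pos (Set.toFinite _)).2 ⟨w', hw'N⟩
      have hc5 := Set.ncard_le_ncard hsub (Set.toFinite _)
      omega
    have honly : ∀ u, K.Adj v u → u = w := by
      intro u h
      rw [hKdef, kempeGraph_adj] at h
      refine huniq u h.1 (hother _ h.2.2 (fun h' => hc₀ h.1 (h'.symm ▸ rfl)))
    have hclaim : ∀ u, K.Reachable v₀ u →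
        (u = v → Hk.Reachable v₀ w) ∧ (u ≠ v → Hk.Reachable v₀ u) := by
      intro u h
      rw [SimpleGraph.reachable_iff_reflTransGen] at h
      induction h with
      | refl => exact ⟨fun h => absurd h hv₀, fun _ => SimpleGraph.Reachable.refl v₀⟩
      | @tail b c hab' hbc ih =>
        constructor
        · intro hc
          have hbc' : K.Adj v b := by rw [← hc]; exact hbc.symm
          have hb : b = w := honly b hbc'
          have hbv : b ≠ v := by rw [hb]; exact hwadj.ne'
          rw [← hb]
          exact ih.2 hbv
        · intro hc
          by_cases hb : b = v
          · have hbc' : K.Adj v c := by rw [← hb]; exact hbc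
            have : c = w := honly c hbc'
            rw [this]
            exact ih.1 hb
          · exact (ih.2 hb).trans (hKHk b c hbc hb hc).reachable
    refine ⟨fun u => if K.Reachable v₀ u then Equiv.swap α β (c₀ u) else c₀ u,
      Relation.ReflTransGen.single
        ⟨α, β, v₀, fun u hu => if_pos hu, fun u hu => if_neg hu⟩,
      fun u hu => ⟨fun hr => ?_, fun hr => ?_⟩⟩
    · simp only [if_pos (hr.mono hKle)]
    · have h' : ¬ K.Reachable v₀ u := fun h => hr ((hclaim u h).2 hu)
      simp only [if_neg h']

end DegenerateMain
section Assemble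
variable {V : Type*} {q : ℕ}

lemma lift_equiv [Finite V] {G : SimpleGraph V} {d : ℕ} (hq : d + 1 ≤ q) {s : Set V} {v : V}
    (hv : v ∈ s) (hd : ({u ∈ s | G.Adj v u}).ncard ≤ d) :
    ∀ c c' : V → Fin q, (indG G (s \ {v})).KempeEquiv c c' →
      (indG G s).IsProperColoring c →
      ∃ c'', (indG G s).KempeEquiv c c'' ∧ ∀ u, u ≠ v → c'' u = c' u := by
  intro c c' hcc hc
  induction hcc with
  | refl => exact ⟨c, Relation.ReflTransGen.refl, fun _ _ => rfl⟩
  | @tail b c' hcb hstep ih =>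
    obtain ⟨c'', hcc'', hagree⟩ := ih
    have hc'' : (indG G s).IsProperColoring c'' := kempeEquiv_proper hcc'' hc
    obtain ⟨α, β, v₀, hR1, hR2⟩ := hstep
    have hkg : (indG G (s \ {v})).kempeGraph b α β
        = (indG G (s \ {v})).kempeGraph c'' α β := by
      apply kempeGraph_congr
      rintro u ⟨w, hw⟩
      rw [indG_adj] at hw
      exact (hagree u hw.2.1.2).symm
    obtain ⟨d', hd'equiv, hd'⟩ := single_lift hq hv hd hc'' α β v₀
    refine ⟨d', hcc''.trans hd'equiv, fun u hu => ?_⟩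
    by_cases hr : ((indG G (s \ {v})).kempeGraph c'' α β).Reachable v₀ u
    · rw [(hd' u hu).1 hr, hagree u hu]
      exact (hR1 u (by rw [hkg]; exact hr)).symm
    · rw [(hd' u hu).2 hr, hagree u hu]
      exact (hR2 u (by rw [hkg]; exact hr)).symm

lemma main_ind [Finite V] {G : SimpleGraph V} {d : ℕ} (hdeg : G.IsDegenerate d)
    (hq : d + 1 ≤ q) :
    ∀ n : ℕ, ∀ s : Set V, s.ncard ≤ n → ∀ c₁ c₂ : V → Fin q,
      (indG G s).IsProperColoring c₁ → (indG G s).IsProperColoring c₂ →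
      (indG G s).KempeEquiv c₁ c₂ := by
  intro n
  induction n with
  | zero =>
    intro s hs c₁ c₂ _ _
    have hse : s = ∅ := by
      rw [← Set.ncard_eq_zero (Set.toFinite _)]; omega
    subst hse
    apply kempeEquiv_of_isolated
    intro u _ w hadj
    rw [indG_adj] at hadj
    exact hadj.2.1
  | succ n ih =>
    intro s hs c₁ c₂ hc₁ hc₂
    rcases Set.eq_empty_or_nonempty s with hse | hsne
    · subst hse
      apply kempeEquiv_of_isolated
      intro u _ w hadj
      rw [indG_adj] at hadj
      exact hadj.2.1
    · obtain ⟨v, hv, hd⟩ := hdeg s hsne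
      have hsub : indG G (s \ {v}) ≤ indG G s := indG_le Set.diff_subset
      have hc₁' : (indG G (s \ {v})).IsProperColoring c₁ := fun u w h => hc₁ (hsub h)
      have hc₂' : (indG G (s \ {v})).IsProperColoring c₂ := fun u w h => hc₂ (hsub h)
      have hcard : (s \ {v}).ncard ≤ n := by
        have h0 := Set.ncard_diff_singleton_of_mem hv
        have h1 : 0 < s.ncard := (Set.ncard_pos (Set.toFinite _)).2 hsne
        omega
      have hIH : (indG G (s \ {v})).KempeEquiv c₁ c₂ := ih (s \ {v}) hcard c₁ c₂ hc₁' hc₂'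
      obtain ⟨c'', hcc'', hagree⟩ := lift_equiv hq hv hd c₁ c₂ hIH hc₁
      have hc''p := kempeEquiv_proper hcc'' hc₁
      exact hcc''.tail (final_step hc''p hc₂ hagree)

end Assemble
theorem isDegenerate_kempeEquiv {V : Type*} [Finite V]
    (G : SimpleGraph V) (d : ℕ) (hdeg : G.IsDegenerate d) :
    ∀ q : ℕ, d + 1 ≤ q →
      ∀ c₁ c₂ : V → Fin q, G.IsProperColoring c₁ → G.IsProperColoring c₂ →
        G.KempeEquiv c₁ c₂ := by
  intro q hq c₁ c₂ hc₁ hc₂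
  have hGind : indG G Set.univ = G := by
    ext u w
    rw [indG_adj]
    exact ⟨fun h => h.1, fun h => ⟨h, trivial, trivial⟩⟩
  have := main_ind hdeg hq (Set.univ : Set V).ncard Set.univ le_rfl c₁ c₂
    (by rw [hGind]; exact hc₁) (by rw [hGind]; exact hc₂)
  rwa [hGind] at this
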